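/- In the hard instance family (Sⱼ = αⱼ B^l αⱼ A^{l−1} B A and Sᵢ = αᵢ B^l αᵢ A^{l+1} for i ≠ j), the string A^{l+1} has cost exactly 1 as a length-(l+1) closest substring of the family, achieved because A^{l+1} is a substring of every Sᵢ with i ≠ j and the best length-(l+1) substring of Sⱼ differs from A^{l+1} in exactly one position. -/
import Mathlib


/-- The minimum Hamming distance between a pattern `v` of length `m` and the
length-`m` substrings of a string `Si` of length `n`. -/
def substrDist {α : Type} [DecidableEq α] {n : ℕ} (m : ℕ) (hm : m ≤ n)
    (Si : Fin n → α) (v : Fin m → α) : ℕ :=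
  Finset.inf' (Finset.univ : Finset (Fin (n - m + 1)))
    ⟨⟨0, Nat.succ_pos _⟩, Finset.mem_univ _⟩
    (fun q => hammingDist v (fun j => Si ⟨q.val + j.val, by
      have h1 := q.2; have h2 := j.2; omega⟩))

/-- The cost of a length-`m` pattern `v` against a family `S` of `t` strings of
length `n`: the sum over the family of the minimum Hamming distance to a
length-`m` substring. -/
def cost {α : Type} [DecidableEq α] {t n : ℕ} (m : ℕ) (hm : m ≤ n)
    (S : Fin t → Fin n → α) (v : Fin m → α) : ℕ :=
  ∑ i : Fin t, substrDist m hm (S i) v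
/-- The hard instance family: symbols `A = 0`, `B = 1`, `αᵢ = i + 2` in `Fin (t+2)`.
`S j = αⱼ B^l αⱼ A^(l-1) B A` for the fixed index `j`, and
`S i = αᵢ B^l αᵢ A^(l+1)` for `i ≠ j`; all strings have length `2l+3`. -/
def hardS (t l : ℕ) (j : Fin t) : Fin t → Fin (2 * l + 3) → Fin (t + 2) :=
  fun i m =>
    if m.val = 0 ∨ m.val = l + 1 then ⟨i.val + 2, by have := i.2; omega⟩
    else if m.val ≤ l then 1
    else if i = j ∧ m.val = 2 * l + 1 then 1
    else 0

theorem hardS_val (t l : ℕ) (j i : Fin t) (m : Fin (2 * l + 3)) :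
    (hardS t l j i m).val =
      if m.val = 0 ∨ m.val = l + 1 then i.val + 2
      else if m.val ≤ l then 1
      else if i = j ∧ m.val = 2 * l + 1 then 1 else 0 := by
  unfold hardS
  split_ifs <;> simp [Fin.val_one]

theorem hard_instance_Al1_cost_one (t l : ℕ) (ht : 2 ≤ t) (hl : 1 ≤ l)
    (j : Fin t) :
    cost (l + 1) (by omega) (hardS t l j) (fun _ => (0 : Fin (t + 2))) = 1 ∧
    (∀ i : Fin t, i ≠ j →
      substrDist (l + 1) (by omega) (hardS t l j i) (fun _ => (0 : Fin (t + 2))) = 0) ∧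
    substrDist (l + 1) (by omega) (hardS t l j j) (fun _ => (0 : Fin (t + 2))) = 1 := by
  have hzero : ∀ i : Fin t, i ≠ j →
      substrDist (l + 1) (by omega) (hardS t l j i) (fun _ => (0 : Fin (t + 2))) = 0 := by
    intro i hij
    apply Nat.le_zero.mp
    refine le_trans (Finset.inf'_le _ (Finset.mem_univ (⟨l + 2, by omega⟩ :
      Fin (2 * l + 3 - (l + 1) + 1)))) ?_
    apply Nat.le_zero.mpr
    rw [hammingDist_eq_zero]
    funext k
    have hk := k.2
    apply Fin.ext
    show (0 : Fin (t + 2)).val = (hardS t l j i _).val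
    rw [hardS_val, Fin.val_zero]
    simp only [Fin.val_mk, hij, false_and, if_false]
    split_ifs with h1 h2 <;> omega
  have hone : substrDist (l + 1) (by omega) (hardS t l j j)
      (fun _ => (0 : Fin (t + 2))) = 1 := by
    apply le_antisymm
    · refine le_trans (Finset.inf'_le _ (Finset.mem_univ (⟨l + 2, by omega⟩ :
        Fin (2 * l + 3 - (l + 1) + 1)))) ?_
      show hammingDist _ _ ≤ 1
      unfold hammingDist
      refine le_trans (Finset.card_le_card (t := {(⟨l - 1, by omega⟩ : Fin (l + 1))}) ?_)
        (le_of_eq (Finset.card_singleton _))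
      intro k hk
      simp only [Finset.mem_filter, Finset.mem_univ, true_and] at hk
      simp only [Finset.mem_singleton]
      by_contra hne
      apply hk
      have hkv : k.val ≠ l - 1 := fun h => hne (Fin.ext h)
      have hk2 := k.2
      apply Fin.ext
      show (0 : Fin (t + 2)).val = (hardS t l j j _).val
      rw [hardS_val, Fin.val_zero]
      simp only [Fin.val_mk, eq_self_iff_true, true_and]
      split_ifs with h1 h2 h3 <;> omega
    · apply Finset.le_inf'
      intro q _
      rw [Nat.one_le_iff_ne_zero, hammingDist_ne_zero]
      have hq := q.2
      intro heq
      by_cases h0 : q.val = 0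
      · have h := congrArg Fin.val (congrFun heq ⟨0, by omega⟩)
        rw [hardS_val] at h
        simp only [Fin.val_mk, Fin.val_zero, eq_self_iff_true, true_and] at h
        split_ifs at h <;> omega
      · by_cases h1 : q.val ≤ l + 1
        · have h := congrArg Fin.val (congrFun heq ⟨l + 1 - q.val, by omega⟩)
          rw [hardS_val] at h
          simp only [Fin.val_mk, Fin.val_zero, eq_self_iff_true, true_and] at h
          split_ifs at h <;> omega
        · have h := congrArg Fin.val (congrFun heq ⟨2 * l + 1 - q.val, by omega⟩)
          rw [hardS_val] at h
          simp only [Fin.val_mk, Fin.val_zero, eq_self_iff_true, true_and] at h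
          split_ifs at h <;> omega
  refine ⟨?_, hzero, hone⟩
  unfold cost
  rw [Finset.sum_eq_single j]
  · exact hone
  · intro i _ hij; exact hzero i hij
  · intro h; exact absurd (Finset.mem_univ j) h
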